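/- Let $L, m > 0$, let $a \in C^2((-L,L)) \cap C^0([-L,L])$ be even and positive with $\sqrt{a}$ convex, and let $v \in C^1([-L,L])$ be strictly increasing with $v' > 0$ and $v(L)=-v(-L)=m$. Then the function $h(t) := \frac{1}{2}\int_{-L}^L \left(\frac{dv^t}{dx}\right)^2 a(x)\,dx = \frac{1}{2}\int_{-m}^m \frac{a(\rho^t(\lambda))}{(\rho^t)'(\lambda)}\,d\lambda$ is convex on $[0,1]$, where $v^t$ is the continuous odd rearrangement of $v$ with inverse $\rho^t(\lambda) = t\rho(\lambda)-(1-t)\rho(-\lambda)$. -/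

import Mathlib

open Set intervalIntegral

/-- Joint convexity inequality for `u²/d` (Cauchy–Schwarz form). -/
lemma stmt11_key (u₀ u₁ d₀ d₁ s s' : ℝ) (hu₀ : 0 ≤ u₀) (hu₁ : 0 ≤ u₁)
    (hd₀ : 0 < d₀) (hd₁ : 0 < d₁) (hs : 0 ≤ s) (hs' : 0 ≤ s') (hss : s + s' = 1) :
    (s * u₀ + s' * u₁) ^ 2 / (s * d₀ + s' * d₁) ≤ s * (u₀ ^ 2 / d₀) + s' * (u₁ ^ 2 / d₁) := by
  have hd : 0 < s * d₀ + s' * d₁ := by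
    rcases eq_or_lt_of_le hs with h | h
    · have : s' = 1 := by linarith
      rw [← h, this]; linarith
    · nlinarith [mul_nonneg hs' hd₁.le]
  rw [div_le_iff₀ hd]
  have h1 : s * (u₀ ^ 2 / d₀) + s' * (u₁ ^ 2 / d₁)
      = (s * u₀ ^ 2 * d₁ + s' * u₁ ^ 2 * d₀) / (d₀ * d₁) := by
    field_simp
  rw [h1, div_mul_eq_mul_div, le_div_iff₀ (by positivity)]
  nlinarith [mul_nonneg (mul_nonneg hs hs') (sq_nonneg (u₀ * d₁ - u₁ * d₀))]

/-- Pointwise convexity in `t` of `a(t p - (1-t) q) / (t r + (1-t) r')`. -/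
lemma stmt11_pt (L : ℝ) (a : ℝ → ℝ) (hapos : ∀ x ∈ Icc (-L) L, 0 < a x)
    (hsqrt : ConvexOn ℝ (Icc (-L) L) (fun x => Real.sqrt (a x)))
    (p q r r' : ℝ) (hp : p ∈ Icc (-L) L) (hq : q ∈ Icc (-L) L)
    (hr : 0 < r) (hr' : 0 < r')
    (t₀ t₁ s s' : ℝ) (ht₀ : t₀ ∈ Icc (0:ℝ) 1) (ht₁ : t₁ ∈ Icc (0:ℝ) 1)
    (hs : 0 ≤ s) (hs' : 0 ≤ s') (hss : s + s' = 1) :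
    a ((s * t₀ + s' * t₁) * p - (1 - (s * t₀ + s' * t₁)) * q) /
        ((s * t₀ + s' * t₁) * r + (1 - (s * t₀ + s' * t₁)) * r')
      ≤ s * (a (t₀ * p - (1 - t₀) * q) / (t₀ * r + (1 - t₀) * r'))
        + s' * (a (t₁ * p - (1 - t₁) * q) / (t₁ * r + (1 - t₁) * r')) := by
  have hqneg : -q ∈ Icc (-L) L := ⟨by linarith [hq.2], by linarith [hq.1]⟩
  have hX : ∀ t ∈ Icc (0:ℝ) 1, t * p - (1 - t) * q ∈ Icc (-L) L := by
    intro t ht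
    have := (convex_Icc (-L) L) hp hqneg ht.1 (by linarith [ht.2] : (0:ℝ) ≤ 1 - t)
      (by ring)
    simpa [smul_eq_mul, mul_comm, sub_eq_add_neg, mul_neg] using this
  have hD : ∀ t ∈ Icc (0:ℝ) 1, 0 < t * r + (1 - t) * r' := by
    intro t ht
    rcases eq_or_lt_of_le ht.1 with h | h
    · have : t = 0 := h.symm
      simp [this]; linarith
    · nlinarith [mul_nonneg (by linarith [ht.2] : (0:ℝ) ≤ 1 - t) hr'.le]
  have hmid : s * t₀ + s' * t₁ ∈ Icc (0:ℝ) 1 := by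
    constructor
    · have h1 := mul_nonneg hs ht₀.1
      have h2 := mul_nonneg hs' ht₁.1
      linarith
    · nlinarith [ht₀.2, ht₁.2]
  set u₀ := Real.sqrt (a (t₀ * p - (1 - t₀) * q)) with hu₀def
  set u₁ := Real.sqrt (a (t₁ * p - (1 - t₁) * q)) with hu₁def
  have hconv :
      Real.sqrt (a ((s * t₀ + s' * t₁) * p - (1 - (s * t₀ + s' * t₁)) * q))
        ≤ s * u₀ + s' * u₁ := by
    have h := hsqrt.2 (hX t₀ ht₀) (hX t₁ ht₁) hs hs' hss
    have harg : s • (t₀ * p - (1 - t₀) * q) + s' • (t₁ * p - (1 - t₁) * q)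
        = (s * t₀ + s' * t₁) * p - (1 - (s * t₀ + s' * t₁)) * q := by
      have hs'' : s' = 1 - s := by linarith
      simp only [smul_eq_mul, hs'']; ring
    rw [harg] at h
    simpa [smul_eq_mul] using h
  have ha_mid : a ((s * t₀ + s' * t₁) * p - (1 - (s * t₀ + s' * t₁)) * q)
      ≤ (s * u₀ + s' * u₁) ^ 2 := by
    have h0 := (Real.sq_sqrt (hapos _ (hX _ hmid)).le).symm
    rw [h0]
    exact pow_le_pow_left₀ (Real.sqrt_nonneg _) hconv 2
  have hu₀sq : u₀ ^ 2 = a (t₀ * p - (1 - t₀) * q) :=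
    Real.sq_sqrt (hapos _ (hX _ ht₀)).le
  have hu₁sq : u₁ ^ 2 = a (t₁ * p - (1 - t₁) * q) :=
    Real.sq_sqrt (hapos _ (hX _ ht₁)).le
  have hDmid : (s * t₀ + s' * t₁) * r + (1 - (s * t₀ + s' * t₁)) * r'
      = s * (t₀ * r + (1 - t₀) * r') + s' * (t₁ * r + (1 - t₁) * r') := by
    nlinarith [hss]
  calc a ((s * t₀ + s' * t₁) * p - (1 - (s * t₀ + s' * t₁)) * q) /
        ((s * t₀ + s' * t₁) * r + (1 - (s * t₀ + s' * t₁)) * r')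
      ≤ (s * u₀ + s' * u₁) ^ 2 /
        ((s * t₀ + s' * t₁) * r + (1 - (s * t₀ + s' * t₁)) * r') := by
        exact (div_le_div_iff_of_pos_right (hD _ hmid)).mpr ha_mid
    _ = (s * u₀ + s' * u₁) ^ 2 /
        (s * (t₀ * r + (1 - t₀) * r') + s' * (t₁ * r + (1 - t₁) * r')) := by rw [hDmid]
    _ ≤ s * (u₀ ^ 2 / (t₀ * r + (1 - t₀) * r'))
        + s' * (u₁ ^ 2 / (t₁ * r + (1 - t₁) * r')) :=
        stmt11_key _ _ _ _ _ _ (Real.sqrt_nonneg _) (Real.sqrt_nonneg _)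
          (hD _ ht₀) (hD _ ht₁) hs hs' hss
    _ = s * (a (t₀ * p - (1 - t₀) * q) / (t₀ * r + (1 - t₀) * r'))
        + s' * (a (t₁ * p - (1 - t₁) * q) / (t₁ * r + (1 - t₁) * r')) := by
        rw [hu₀sq, hu₁sq]

/-- Lemma 2.5 of the paper. With `a ∈ C²((-L,L)) ∩ C⁰([-L,L])` even,
positive, `√a` convex, and `v ∈ C¹([-L,L])` strictly increasing with `v' > 0`,
`v(L) = -v(-L) = m`, the Dirichlet energy along the continuous odd rearrangement,
`h(t) = ½ ∫_{-m}^{m} a(ρ^t(λ)) / (ρ^t)'(λ) dλ` with `ρ^t(λ) = tρ(λ) - (1-t)ρ(-λ)`,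
is convex on `[0,1]`. -/
theorem stmt_11 (L m : ℝ) (hL : 0 < L) (hm : 0 < m) (a v ρ ρ' : ℝ → ℝ)
    (hac : ContinuousOn a (Icc (-L) L)) (haC2 : ContDiffOn ℝ 2 a (Ioo (-L) L))
    (haeven : ∀ x, a (-x) = a x) (hapos : ∀ x ∈ Icc (-L) L, 0 < a x)
    (hsqrt : ConvexOn ℝ (Icc (-L) L) (fun x => Real.sqrt (a x)))
    (hv : ContDiffOn ℝ 1 v (Icc (-L) L)) (hvmono : StrictMonoOn v (Icc (-L) L))
    (hv' : ∀ x ∈ Icc (-L) L, 0 < derivWithin v (Icc (-L) L) x)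
    (hvL : v (-L) = -m) (hvR : v L = m)
    (hρmaps : MapsTo ρ (Icc (-m) m) (Icc (-L) L))
    (hρv : ∀ x ∈ Icc (-L) L, ρ (v x) = x)
    (hvρ : ∀ lam ∈ Icc (-m) m, v (ρ lam) = lam)
    (hρ' : ∀ lam ∈ Icc (-m) m, HasDerivWithinAt ρ (ρ' lam) (Icc (-m) m) lam)
    (hρ'pos : ∀ lam ∈ Icc (-m) m, 0 < ρ' lam) :
    ConvexOn ℝ (Icc (0:ℝ) 1) (fun t =>
      (1/2) * ∫ lam in (-m)..m,
        a (t * ρ lam - (1 - t) * ρ (-lam)) / (t * ρ' lam + (1 - t) * ρ' (-lam))) := by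
  have hmm : -m ≤ m := by linarith
  have hLL : -L < L := by linarith
  -- continuity of ρ
  have hρcont : ContinuousOn ρ (Icc (-m) m) := fun lam hlam =>
    (hρ' lam hlam).continuousWithinAt
  have hnegmaps : MapsTo (fun lam : ℝ => -lam) (Icc (-m) m) (Icc (-m) m) := by
    intro lam hlam
    simp only [mem_Icc] at hlam ⊢
    constructor <;> linarith
  -- continuity of ρ'
  set w := derivWithin v (Icc (-L) L) with hwdef
  have hwcont : ContinuousOn w (Icc (-L) L) :=
    hv.continuousOn_derivWithin (uniqueDiffOn_Icc hLL) le_rfl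
  have hud : UniqueDiffOn ℝ (Icc (-m) m) := uniqueDiffOn_Icc (by linarith)
  have hρ'eq : ∀ lam ∈ Icc (-m) m, ρ' lam = 1 / w (ρ lam) := by
    intro lam hlam
    have hvdiff : HasDerivWithinAt v (w (ρ lam)) (Icc (-L) L) (ρ lam) :=
      ((hv.differentiableOn one_ne_zero) (ρ lam) (hρmaps hlam)).hasDerivWithinAt
    have h1 : HasDerivWithinAt (v ∘ ρ) (w (ρ lam) * ρ' lam) (Icc (-m) m) lam :=
      hvdiff.comp lam (hρ' lam hlam) hρmaps
    have h2 : HasDerivWithinAt (v ∘ ρ) 1 (Icc (-m) m) lam := by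
      have hid : HasDerivWithinAt (fun x : ℝ => x) 1 (Icc (-m) m) lam :=
        hasDerivWithinAt_id lam _
      exact hid.congr (fun y hy => hvρ y hy) (hvρ lam hlam)
    have he : w (ρ lam) * ρ' lam = 1 := by
      have e1 := h1.derivWithin (hud lam hlam)
      have e2 := h2.derivWithin (hud lam hlam)
      rw [e1] at e2; exact e2
    have hwpos : 0 < w (ρ lam) := hv' _ (hρmaps hlam)
    rw [eq_div_iff hwpos.ne']
    linear_combination he
  have hρ'cont : ContinuousOn ρ' (Icc (-m) m) := by
    apply ContinuousOn.congr (f := fun lam => 1 / w (ρ lam)) ?_ hρ'eq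
    apply ContinuousOn.div continuousOn_const (hwcont.comp hρcont hρmaps)
    intro lam hlam
    exact (hv' _ (hρmaps hlam)).ne'
  -- membership facts
  have hXmem : ∀ t ∈ Icc (0:ℝ) 1, ∀ lam ∈ Icc (-m) m,
      t * ρ lam - (1 - t) * ρ (-lam) ∈ Icc (-L) L := by
    intro t ht lam hlam
    have hp := hρmaps hlam
    have hq := hρmaps (hnegmaps hlam)
    have hqneg : -ρ (-lam) ∈ Icc (-L) L := ⟨by linarith [hq.2], by linarith [hq.1]⟩
    have := (convex_Icc (-L) L) hp hqneg ht.1 (by linarith [ht.2] : (0:ℝ) ≤ 1 - t)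
      (by ring)
    simpa [smul_eq_mul, sub_eq_add_neg, mul_neg] using this
  have hDpos : ∀ t ∈ Icc (0:ℝ) 1, ∀ lam ∈ Icc (-m) m,
      0 < t * ρ' lam + (1 - t) * ρ' (-lam) := by
    intro t ht lam hlam
    have hr := hρ'pos lam hlam
    have hr' := hρ'pos (-lam) (hnegmaps hlam)
    rcases eq_or_lt_of_le ht.1 with h | h
    · have : t = 0 := h.symm
      simp [this]; linarith
    · nlinarith [mul_nonneg (by linarith [ht.2] : (0:ℝ) ≤ 1 - t) hr'.le]
  -- integrability
  have hint : ∀ t ∈ Icc (0:ℝ) 1, IntervalIntegrable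
      (fun lam => a (t * ρ lam - (1 - t) * ρ (-lam)) /
        (t * ρ' lam + (1 - t) * ρ' (-lam))) MeasureTheory.volume (-m) m := by
    intro t ht
    apply ContinuousOn.intervalIntegrable
    rw [uIcc_of_le hmm]
    apply ContinuousOn.div
    · apply hac.comp
      · exact (continuousOn_const.mul hρcont).sub
          (continuousOn_const.mul (hρcont.comp continuousOn_neg hnegmaps))
      · intro lam hlam
        exact hXmem t ht lam hlam
    · exact (continuousOn_const.mul hρ'cont).add
        (continuousOn_const.mul (hρ'cont.comp continuousOn_neg hnegmaps))
    · intro lam hlam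
      exact (hDpos t ht lam hlam).ne'
  refine ⟨convex_Icc _ _, ?_⟩
  intro t₀ ht₀ t₁ ht₁ s s' hs hs' hss
  simp only [smul_eq_mul]
  have hmid : s * t₀ + s' * t₁ ∈ Icc (0:ℝ) 1 := by
    constructor
    · have := mul_nonneg hs ht₀.1
      have := mul_nonneg hs' ht₁.1
      linarith
    · nlinarith [ht₀.2, ht₁.2]
  have hmono : (∫ lam in (-m)..m,
        a ((s * t₀ + s' * t₁) * ρ lam - (1 - (s * t₀ + s' * t₁)) * ρ (-lam)) /
          ((s * t₀ + s' * t₁) * ρ' lam + (1 - (s * t₀ + s' * t₁)) * ρ' (-lam)))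
      ≤ ∫ lam in (-m)..m,
        (s * (a (t₀ * ρ lam - (1 - t₀) * ρ (-lam)) /
            (t₀ * ρ' lam + (1 - t₀) * ρ' (-lam)))
          + s' * (a (t₁ * ρ lam - (1 - t₁) * ρ (-lam)) /
            (t₁ * ρ' lam + (1 - t₁) * ρ' (-lam)))) := by
    apply intervalIntegral.integral_mono_on hmm (hint _ hmid)
      (((hint _ ht₀).const_mul s).add ((hint _ ht₁).const_mul s'))
    intro lam hlam
    exact stmt11_pt L a hapos hsqrt (ρ lam) (ρ (-lam)) (ρ' lam) (ρ' (-lam))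
      (hρmaps hlam) (hρmaps (hnegmaps hlam)) (hρ'pos lam hlam)
      (hρ'pos (-lam) (hnegmaps hlam)) t₀ t₁ s s' ht₀ ht₁ hs hs' hss
  have hsplit : (∫ lam in (-m)..m,
        (s * (a (t₀ * ρ lam - (1 - t₀) * ρ (-lam)) /
            (t₀ * ρ' lam + (1 - t₀) * ρ' (-lam)))
          + s' * (a (t₁ * ρ lam - (1 - t₁) * ρ (-lam)) /
            (t₁ * ρ' lam + (1 - t₁) * ρ' (-lam)))))
      = s * (∫ lam in (-m)..m, a (t₀ * ρ lam - (1 - t₀) * ρ (-lam)) /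
            (t₀ * ρ' lam + (1 - t₀) * ρ' (-lam)))
        + s' * (∫ lam in (-m)..m, a (t₁ * ρ lam - (1 - t₁) * ρ (-lam)) /
            (t₁ * ρ' lam + (1 - t₁) * ρ' (-lam))) := by
    rw [intervalIntegral.integral_add ((hint _ ht₀).const_mul s)
      ((hint _ ht₁).const_mul s'), intervalIntegral.integral_const_mul,
      intervalIntegral.integral_const_mul]
  rw [hsplit] at hmono
  linarith
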